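/- Let H be an infinite-dimensional separable complex Hilbert space, A a bounded self-adjoint operator on H, G a finite set of vectors in H, and L : G → ℕ ∪ {∞} a function satisfying the span condition: the closed linear span of { A^n g : g ∈ G, 0 ≤ n < L(g) } equals the closed linear span of { A^n g : g ∈ G, n ∈ ℕ }. Assume A^n g ≠ 0 for all g ∈ G and all n < L(g). Then the normalized family (A^n g / ‖A^n g‖), indexed by pairs (g,n) with g ∈ G and 0 ≤ n < L(g), is not a frame for H. -/

import Mathlib

open ContinuousLinearMap
open scoped InnerProductSpace ENNReal

section aux
variable {H : Type*} [NormedAddCommGroup H] [InnerProductSpace ℂ H] [CompleteSpace H]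

lemma shift_lemma (A : H →L[ℂ] H) (hA : adjoint A = A) (x : H) (p q : ℕ) :
    ⟪(A ^ p) x, (A ^ (q + 1)) x⟫_ℂ = ⟪(A ^ (p + 1)) x, (A ^ q) x⟫_ℂ := by
  have h1 : (A ^ (q + 1)) x = A ((A ^ q) x) := by rw [pow_succ']; rfl
  have h2 : (A ^ (p + 1)) x = A ((A ^ p) x) := by rw [pow_succ']; rfl
  rw [h1, h2, ← adjoint_inner_right A ((A ^ p) x) ((A ^ q) x), hA]

lemma inner_pow_eq (A : H →L[ℂ] H) (hA : adjoint A = A) (x : H) :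
    ∀ k p : ℕ, ⟪(A ^ p) x, (A ^ (p + 2 * k)) x⟫_ℂ = ((‖(A ^ (p + k)) x‖ : ℂ)) ^ 2 := by
  intro k
  induction k with
  | zero => intro p; simpa using inner_self_eq_norm_sq_to_K ((A ^ p) x)
  | succ k ih =>
      intro p
      have h : p + 2 * (k + 1) = (p + 2 * k + 1) + 1 := by ring
      rw [h, shift_lemma A hA]
      have h2 : p + 2 * k + 1 = (p + 1) + 2 * k := by ring
      rw [h2, ih (p + 1)]
      ring_nf

end aux

theorem stmt_12 {H : Type*} [NormedAddCommGroup H] [InnerProductSpace ℂ H] [CompleteSpace H]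
    [TopologicalSpace.SeparableSpace H] (hdim : ¬ FiniteDimensional ℂ H)
    (A : H →L[ℂ] H) (hA : adjoint A = A)
    (G : Set H) (hGfin : G.Finite) (L : ↥G → ℕ∞)
    (hspan :
      (Submodule.span ℂ
        {x | ∃ g : ↥G, ∃ n : ℕ, (n : ℕ∞) < L g ∧ x = (A ^ n) (g : H)}).topologicalClosure =
      (Submodule.span ℂ
        {x | ∃ g : ↥G, ∃ n : ℕ, x = (A ^ n) (g : H)}).topologicalClosure)
    (hnz : ∀ g : ↥G, ∀ n : ℕ, (n : ℕ∞) < L g → (A ^ n) (g : H) ≠ 0) :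
    ¬ ∃ α β : ℝ, 0 < α ∧ α ≤ β ∧ ∀ f : H,
      ENNReal.ofReal (α * ‖f‖ ^ 2) ≤
        (∑' q : {p : ↥G × ℕ // (p.2 : ℕ∞) < L p.1},
          (‖⟪f, (‖(A ^ q.1.2) (q.1.1 : H)‖⁻¹ : ℝ) • (A ^ q.1.2) (q.1.1 : H)⟫_ℂ‖₊ : ℝ≥0∞) ^ 2) ∧
      (∑' q : {p : ↥G × ℕ // (p.2 : ℕ∞) < L p.1},
          (‖⟪f, (‖(A ^ q.1.2) (q.1.1 : H)‖⁻¹ : ℝ) • (A ^ q.1.2) (q.1.1 : H)⟫_ℂ‖₊ : ℝ≥0∞) ^ 2) ≤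
        ENNReal.ofReal (β * ‖f‖ ^ 2) := by
  rintro ⟨α, β, hα, hαβ, hframe⟩
  by_cases hinf : ∃ g : ↥G, L g = ⊤
  · -- infinite case
    obtain ⟨g, hLg⟩ := hinf
    set a : ℕ → ℝ := fun n => ‖(A ^ n) (g : H)‖ with ha
    have hapos : ∀ n, 0 < a n := fun n =>
      norm_pos_iff.mpr (hnz g n (by rw [hLg]; exact WithTop.coe_lt_top (n : ℕ)))
    set c : ℕ → ℝ := fun n => a (n + 1) / a n with hc
    have hcpos : ∀ n, 0 < c n := fun n => div_pos (hapos _) (hapos _)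
    have hkey : ∀ p k : ℕ, ⟪(A ^ p) (g : H), (A ^ (p + 2 * k)) (g : H)⟫_ℂ
        = ((a (p + k) : ℂ)) ^ 2 := fun p k => inner_pow_eq A hA (g : H) k p
    have hCS : ∀ n, a (n + 1) ^ 2 ≤ a n * a (n + 2) := by
      intro n
      have h2 := norm_inner_le_norm (𝕜 := ℂ) ((A ^ n) (g : H)) ((A ^ (n + 2 * 1)) (g : H))
      rw [hkey n 1] at h2
      have h3 : ‖((a (n + 1) : ℂ)) ^ 2‖ = a (n + 1) ^ 2 := by
        rw [norm_pow, Complex.norm_real, Real.norm_eq_abs, abs_of_nonneg (hapos _).le]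
      rw [h3] at h2
      simpa [ha] using h2
    have hcmono : Monotone c := by
      apply monotone_nat_of_le_succ
      intro n
      rw [hc]
      rw [div_le_div_iff₀ (hapos n) (hapos (n + 1))]
      nlinarith [hCS n]
    have hanext : ∀ n, a (n + 1) = c n * a n := fun n => by
      rw [hc]; exact (div_mul_cancel₀ _ (hapos n).ne').symm
    have hAnorm : ∀ n, a (n + 1) ≤ ‖A‖ * a n := by
      intro n
      have he : (A ^ (n + 1)) (g : H) = A ((A ^ n) (g : H)) := by rw [pow_succ']; rfl
      calc a (n + 1) = ‖A ((A ^ n) (g : H))‖ := by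
            rw [show a (n + 1) = ‖(A ^ (n + 1)) (g : H)‖ from rfl, he]
      _ ≤ ‖A‖ * ‖(A ^ n) (g : H)‖ := A.le_opNorm _
      _ = ‖A‖ * a n := rfl
    have hcbdd : BddAbove (Set.range c) := by
      refine ⟨‖A‖, ?_⟩
      rintro _ ⟨n, rfl⟩
      rw [hc, div_le_iff₀ (hapos n)]
      exact hAnorm n
    set s : ℝ := ⨆ n, c n with hs
    have hcle : ∀ n, c n ≤ s := fun n => le_ciSup hcbdd n
    have hs0 : 0 < s := lt_of_lt_of_le (hcpos 0) (hcle 0)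
    set K : ℕ := ⌈4 * β⌉₊ with hK
    have htendK : Filter.Tendsto (fun n => (c n / s) ^ K) Filter.atTop (nhds 1) := by
      have h1 : Filter.Tendsto (fun n => c n / s) Filter.atTop (nhds (s / s)) :=
        (tendsto_atTop_ciSup hcmono hcbdd).div_const s
      rw [div_self (ne_of_gt hs0)] at h1
      simpa using h1.pow K
    obtain ⟨M, hM⟩ := (htendK.eventually
      (eventually_gt_nhds (by norm_num : (1 : ℝ) / 2 < 1))).exists
    set t : ℝ := c M / s with ht
    have ht0 : 0 < t := div_pos (hcpos M) hs0
    have ht1 : t ≤ 1 := div_le_one_of_le₀ (hcle M) hs0.le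
    have htK : 1 / 2 < t ^ K := hM
    have hgrow1 : ∀ k, a M * c M ^ k ≤ a (M + k) := by
      intro k
      induction k with
      | zero => simp
      | succ k ih =>
          calc a M * c M ^ (k + 1) = c M * (a M * c M ^ k) := by ring
          _ ≤ c M * a (M + k) := mul_le_mul_of_nonneg_left ih (hcpos M).le
          _ ≤ c (M + k) * a (M + k) :=
              mul_le_mul_of_nonneg_right (hcmono (Nat.le_add_right M k)) (hapos _).le
          _ = a (M + k + 1) := (hanext (M + k)).symm
    have hgrow2 : ∀ n k, a (n + k) ≤ a n * s ^ k := by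
      intro n k
      induction k with
      | zero => simp
      | succ k ih =>
          calc a (n + k + 1) = c (n + k) * a (n + k) := hanext (n + k)
          _ ≤ s * (a n * s ^ k) :=
              mul_le_mul (hcle (n + k)) ih (hapos _).le hs0.le
          _ = a n * s ^ (k + 1) := by ring
    have hT : ∀ k, t ^ k ≤ a (M + k) ^ 2 / (a M * a (M + 2 * k)) := by
      intro k
      rw [le_div_iff₀ (mul_pos (hapos M) (hapos _))]
      have h2 : a (M + 2 * k) ≤ a (M + k) * s ^ k := by
        have := hgrow2 (M + k) k
        rwa [show M + k + k = M + 2 * k by ring] at this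
      have h2' : a (M + 2 * k) / s ^ k ≤ a (M + k) :=
        (div_le_iff₀ (pow_pos hs0 k)).mpr h2
      calc t ^ k * (a M * a (M + 2 * k))
          = (a M * c M ^ k) * (a (M + 2 * k) / s ^ k) := by
            rw [ht, div_pow]
            field_simp
      _ ≤ a (M + k) * a (M + k) :=
          mul_le_mul (hgrow1 k) h2' (div_nonneg (hapos _).le (pow_pos hs0 k).le) (hapos _).le
      _ = a (M + k) ^ 2 := (sq _).symm
    have hpf : ∀ k : ℕ, ((M + 2 * k : ℕ) : ℕ∞) < L g := fun k => by
      rw [hLg]; exact WithTop.coe_lt_top _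
    set f : H := (‖(A ^ M) (g : H)‖⁻¹ : ℝ) • (A ^ M) (g : H) with hf
    have hfnorm : ‖f‖ = 1 := by
      rw [hf, norm_smul, Real.norm_eq_abs, abs_of_nonneg (inv_nonneg.mpr (norm_nonneg _))]
      exact inv_mul_cancel₀ (hapos M).ne'
    set T : ℕ → ℝ := fun k => (a M)⁻¹ * (a (M + 2 * k))⁻¹ * a (M + k) ^ 2 with hTdef
    have hTpos : ∀ k, 0 < T k := fun k => by
      rw [hTdef]
      exact mul_pos (mul_pos (inv_pos.mpr (hapos M)) (inv_pos.mpr (hapos _)))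
        (pow_pos (hapos _) 2)
    have hTt : ∀ k, t ^ k ≤ T k := by
      intro k
      have := hT k
      rw [hTdef]
      rw [div_eq_mul_inv, mul_inv] at this
      calc t ^ k ≤ a (M + k) ^ 2 * ((a M)⁻¹ * (a (M + 2 * k))⁻¹) := this
      _ = (a M)⁻¹ * (a (M + 2 * k))⁻¹ * a (M + k) ^ 2 := by ring
    have hterm : ∀ k : ℕ,
        (‖⟪f, (‖(A ^ (M + 2 * k)) (g : H)‖⁻¹ : ℝ) • (A ^ (M + 2 * k)) (g : H)⟫_ℂ‖₊ : ℝ≥0∞) ^ 2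
        = ENNReal.ofReal (T k) ^ 2 := by
      intro k
      have hin : ⟪f, (‖(A ^ (M + 2 * k)) (g : H)‖⁻¹ : ℝ) • (A ^ (M + 2 * k)) (g : H)⟫_ℂ
          = ((T k : ℝ) : ℂ) := by
        rw [hf, RCLike.real_smul_eq_coe_smul (K := ℂ), RCLike.real_smul_eq_coe_smul (K := ℂ),
          inner_smul_left, inner_smul_right, hkey M k, RCLike.conj_ofReal, hTdef]
        simp only [ha, show (RCLike.ofReal : ℝ → ℂ) = Complex.ofReal from rfl]
        push_cast
        ring
      rw [hin, ← enorm_eq_nnnorm, ← ofReal_norm, Complex.norm_real, Real.norm_eq_abs,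
        abs_of_nonneg (hTpos k).le]
    -- assemble the contradiction
    have hup := (hframe f).2
    have hcomp := ENNReal.tsum_comp_le_tsum_of_injective
      (f := fun k : ℕ => (⟨(g, M + 2 * k), hpf k⟩ : {p : ↥G × ℕ // (p.2 : ℕ∞) < L p.1}))
      (by
        intro k1 k2 h
        simp only [Subtype.mk.injEq, Prod.mk.injEq] at h
        omega)
      (fun q : {p : ↥G × ℕ // (p.2 : ℕ∞) < L p.1} =>
        (‖⟪f, (‖(A ^ q.1.2) (q.1.1 : H)‖⁻¹ : ℝ) • (A ^ q.1.2) (q.1.1 : H)⟫_ℂ‖₊ : ℝ≥0∞) ^ 2)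
    have hlow4 : ∀ k ∈ Finset.range (K + 1),
        ENNReal.ofReal (1 / 4) ≤
        (‖⟪f, (‖(A ^ (M + 2 * k)) (g : H)‖⁻¹ : ℝ) • (A ^ (M + 2 * k)) (g : H)⟫_ℂ‖₊ : ℝ≥0∞) ^ 2 := by
      intro k hk
      rw [hterm k, ← ENNReal.ofReal_pow (hTpos k).le]
      apply ENNReal.ofReal_le_ofReal
      have hk' : k ≤ K := by
        simpa using Nat.lt_succ_iff.mp (Finset.mem_range.mp hk)
      have h1 : t ^ K ≤ t ^ k := pow_le_pow_of_le_one ht0.le ht1 hk'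
      have h2 : (1 : ℝ) / 2 ≤ T k := le_trans (le_of_lt htK) (le_trans h1 (hTt k))
      nlinarith [hTpos k]
    have hsum : (((K + 1 : ℕ) : ℝ≥0∞)) * ENNReal.ofReal (1 / 4) ≤
        ENNReal.ofReal (β * ‖f‖ ^ 2) := by
      calc (((K + 1 : ℕ) : ℝ≥0∞)) * ENNReal.ofReal (1 / 4)
          = (Finset.range (K + 1)).card • ENNReal.ofReal (1 / 4) := by
            rw [Finset.card_range, nsmul_eq_mul]
      _ ≤ ∑ k ∈ Finset.range (K + 1),
            (‖⟪f, (‖(A ^ (M + 2 * k)) (g : H)‖⁻¹ : ℝ) •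
              (A ^ (M + 2 * k)) (g : H)⟫_ℂ‖₊ : ℝ≥0∞) ^ 2 :=
            Finset.card_nsmul_le_sum _ _ _ hlow4
      _ ≤ ∑' k : ℕ,
            (‖⟪f, (‖(A ^ (M + 2 * k)) (g : H)‖⁻¹ : ℝ) •
              (A ^ (M + 2 * k)) (g : H)⟫_ℂ‖₊ : ℝ≥0∞) ^ 2 :=
            ENNReal.sum_le_tsum _
      _ ≤ _ := le_trans hcomp hup
    rw [hfnorm] at hsum
    have hβ0 : (0 : ℝ) ≤ β := le_of_lt (lt_of_lt_of_le hα hαβ)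
    rw [show (((K + 1 : ℕ) : ℝ≥0∞)) = ENNReal.ofReal ((K + 1 : ℕ) : ℝ) by
        rw [ENNReal.ofReal_natCast]] at hsum
    rw [← ENNReal.ofReal_mul (by positivity)] at hsum
    rw [ENNReal.ofReal_le_ofReal_iff (by nlinarith)] at hsum
    have hceil : (4 : ℝ) * β ≤ (K : ℝ) := Nat.le_ceil _
    push_cast at hsum
    nlinarith [hsum, hceil]
  · -- finite case
    push_neg at hinf
    haveI : Finite ↥G := hGfin.to_subtype
    haveI : Fintype ↥G := Fintype.ofFinite _
    set N : ℕ := Finset.univ.sup (fun g : ↥G => (L g).toNat) with hN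
    haveI hidx : Finite {p : ↥G × ℕ // (p.2 : ℕ∞) < L p.1} := by
      have hsub : {p : ↥G × ℕ | (p.2 : ℕ∞) < L p.1} ⊆ (Set.univ : Set ↥G) ×ˢ Set.Iio (N + 1) := by
        rintro ⟨g, n⟩ hp
        refine ⟨trivial, ?_⟩
        simp only [Set.mem_Iio]
        have h3 : (n : ℕ∞) < L g := hp
        rw [← ENat.coe_toNat (hinf g)] at h3
        have h3' : n < (L g).toNat := by exact_mod_cast h3
        have h4 : (L g).toNat ≤ N := Finset.le_sup (f := fun g : ↥G => (L g).toNat) (Finset.mem_univ g)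
        omega
      exact ((Set.finite_univ.prod (Set.finite_Iio _)).subset hsub).to_subtype
    set V := Submodule.span ℂ
      (Set.range (fun q : {p : ↥G × ℕ // (p.2 : ℕ∞) < L p.1} => (A ^ q.1.2) (q.1.1 : H)))
      with hV
    haveI : FiniteDimensional ℂ V := FiniteDimensional.span_of_finite ℂ (Set.finite_range _)
    by_cases hVtop : V = ⊤
    · apply hdim
      haveI : FiniteDimensional ℂ (⊤ : Submodule ℂ H) := hVtop ▸ inferInstance
      exact FiniteDimensional.of_injective
        (Submodule.topEquiv (R := ℂ) (M := H)).symm.toLinearMap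
        (LinearEquiv.injective _)
    · have hVo : Vᗮ ≠ ⊥ := fun h => hVtop (Submodule.orthogonal_eq_bot_iff.mp h)
      obtain ⟨f, hfV, hf0⟩ := Submodule.exists_mem_ne_zero_of_ne_bot hVo
      have hsum0 : (∑' q : {p : ↥G × ℕ // (p.2 : ℕ∞) < L p.1},
          (‖⟪f, (‖(A ^ q.1.2) (q.1.1 : H)‖⁻¹ : ℝ) • (A ^ q.1.2) (q.1.1 : H)⟫_ℂ‖₊ : ℝ≥0∞) ^ 2)
          = 0 := by
        refine ENNReal.tsum_eq_zero.mpr fun q => ?_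
        have hv : (A ^ q.1.2) (q.1.1 : H) ∈ V := Submodule.subset_span ⟨q, rfl⟩
        have h0 : ⟪f, (A ^ q.1.2) (q.1.1 : H)⟫_ℂ = 0 := by
          have := (Submodule.mem_orthogonal V f).mp hfV _ hv
          rw [← inner_conj_symm, this, map_zero]
        rw [inner_smul_right_eq_smul, h0]
        simp
      have hlow := (hframe f).1
      rw [hsum0, nonpos_iff_eq_zero, ENNReal.ofReal_eq_zero] at hlow
      have hf : 0 < ‖f‖ := norm_pos_iff.mpr hf0
      nlinarith [mul_pos hα (pow_pos hf 2)]
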